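/- arXiv:1305.7477 — 2 statements merged into one kernel-verified Lean document; each statement's English description precedes it below -/
import Mathlib

section
/- Consistency of the restricted M-estimator: Let ℓ be convex and twice continuously differentiable, M ⊆ ℝ^p a subspace containing θ*, and suppose ℓ is m-strongly convex on a convex set C ⊆ M containing θ* and the minimizer θ̂ of θ ↦ ℓ(θ) + λ h_A(θ) over M. Let ‖·‖ be a norm with dual ‖·‖_*, and define κ_{err*} = sup{‖x‖_* : ‖x‖₂ ≤ 1, x ∈ M}, κ_A = sup{h_A(x) : ‖x‖₂ ≤ 1, x ∈ M}. If λ > (2τ̄/τ)‖∇ℓ(θ*)‖ for constants 0 < τ ≤ τ̄, then the minimizer θ̂ is unique and ‖θ̂ − θ*‖₂ ≤ (2/m)(κ_A + (τ/(2τ̄))κ_{err*}) λ. -/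
open RealInnerProductSpace

/-- The support function of a set `C` at `x`. -/
noncomputable def suppFn {p : ℕ} (C : Set (EuclideanSpace ℝ (Fin p)))
    (x : EuclideanSpace ℝ (Fin p)) : ℝ :=
  sSup ((fun y => ⟪y, x⟫) '' C)

section Aux

variable {p : ℕ}

/-- 1-D second-order lower bound. -/
lemma aux_taylor_lb (g g' g'' : ℝ → ℝ)
    (hg : ∀ t, HasDerivAt g (g' t) t) (hg' : ∀ t, HasDerivAt g' (g'' t) t)
    (c : ℝ) (hc : ∀ t ∈ Set.Icc (0:ℝ) 1, c ≤ g'' t) :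
    g 0 + g' 0 + c / 2 ≤ g 1 := by
  set φ : ℝ → ℝ := fun t => g t - g 0 - g' 0 * t - c * t ^ 2 / 2 with hφ
  set φ' : ℝ → ℝ := fun t => g' t - g' 0 - c * t with hφ'
  have hdφ : ∀ t, HasDerivAt φ (φ' t) t := by
    intro t
    have := (((hg t).sub_const (g 0)).sub ((hasDerivAt_id t).const_mul (g' 0))).sub
      (((hasDerivAt_id t).pow 2).const_mul c |>.div_const 2)
    refine this.congr_deriv ?_
    simp [φ']
    ring
  have hdφ' : ∀ t, HasDerivAt φ' (g'' t - c) t := by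
    intro t
    have := ((hg' t).sub_const (g' 0)).sub ((hasDerivAt_id t).const_mul c)
    exact this.congr_deriv (by ring)
  have hmono' : MonotoneOn φ' (Set.Icc 0 1) := by
    apply monotoneOn_of_deriv_nonneg (convex_Icc 0 1)
      (fun t _ => (hdφ' t).continuousAt.continuousWithinAt)
      (fun t ht => ((hdφ' t).differentiableAt.differentiableWithinAt))
    intro t ht
    rw [interior_Icc] at ht
    rw [(hdφ' t).deriv]
    have := hc t ⟨le_of_lt ht.1, le_of_lt ht.2⟩
    linarith
  have hφ'0 : φ' 0 = 0 := by simp [φ']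
  have hφ'nonneg : ∀ t ∈ Set.Icc (0:ℝ) 1, 0 ≤ φ' t := by
    intro t ht
    have := hmono' (Set.mem_Icc.mpr ⟨le_refl 0, zero_le_one⟩) ht ht.1
    rw [hφ'0] at this; exact this
  have hmono : MonotoneOn φ (Set.Icc 0 1) := by
    apply monotoneOn_of_deriv_nonneg (convex_Icc 0 1)
      (fun t _ => (hdφ t).continuousAt.continuousWithinAt)
      (fun t ht => ((hdφ t).differentiableAt.differentiableWithinAt))
    intro t ht
    rw [interior_Icc] at ht
    rw [(hdφ t).deriv]
    exact hφ'nonneg t ⟨le_of_lt ht.1, le_of_lt ht.2⟩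
  have h01 : φ 0 ≤ φ 1 :=
    hmono (Set.mem_Icc.mpr ⟨le_refl 0, zero_le_one⟩)
      (Set.mem_Icc.mpr ⟨zero_le_one, le_refl 1⟩) zero_le_one
  simp only [φ] at h01
  nlinarith [h01]

/-- Derivatives of `ℓ` along a line. -/
lemma aux_deriv_along (ℓ : EuclideanSpace ℝ (Fin p) → ℝ) (hℓ : ContDiff ℝ 2 ℓ)
    (x v : EuclideanSpace ℝ (Fin p)) :
    (∀ t : ℝ, HasDerivAt (fun t => ℓ (x + t • v)) (fderiv ℝ ℓ (x + t • v) v) t) ∧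
    (∀ t : ℝ, HasDerivAt (fun t => fderiv ℝ ℓ (x + t • v) v)
      (fderiv ℝ (fderiv ℝ ℓ) (x + t • v) v v) t) := by
  have hline : ∀ t : ℝ, HasDerivAt (fun t : ℝ => x + t • v) v t := by
    intro t
    simpa using ((hasDerivAt_id t).smul_const v).const_add x
  have hdiff : Differentiable ℝ ℓ := hℓ.differentiable (by norm_num)
  have hφ : Differentiable ℝ (fderiv ℝ ℓ) :=
    (hℓ.fderiv_right (m := 1) (by norm_num)).differentiable (by norm_num)
  constructor
  · intro t
    exact ((hdiff (x + t • v)).hasFDerivAt).comp_hasDerivAt t (hline t)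
  · intro t
    have h1 : HasDerivAt (fun t : ℝ => fderiv ℝ ℓ (x + t • v))
        (fderiv ℝ (fderiv ℝ ℓ) (x + t • v) v) t :=
      ((hφ (x + t • v)).hasFDerivAt).comp_hasDerivAt t (hline t)
    have h2 := (ContinuousLinearMap.apply ℝ ℝ v).hasFDerivAt.comp_hasDerivAt t h1
    exact h2

/-- Second-order Taylor bound under restricted strong convexity. -/
lemma aux_sc_taylor (ℓ : EuclideanSpace ℝ (Fin p) → ℝ) (hℓ : ContDiff ℝ 2 ℓ)
    (C : Set (EuclideanSpace ℝ (Fin p))) (hCconv : Convex ℝ C)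
    (θ0 θ1 : EuclideanSpace ℝ (Fin p)) (h0 : θ0 ∈ C) (h1 : θ1 ∈ C) (m : ℝ)
    (hsc' : ∀ θ ∈ C, m * ‖θ1 - θ0‖ ^ 2 ≤ fderiv ℝ (fderiv ℝ ℓ) θ (θ1 - θ0) (θ1 - θ0)) :
    ℓ θ0 + fderiv ℝ ℓ θ0 (θ1 - θ0) + m * ‖θ1 - θ0‖ ^ 2 / 2 ≤ ℓ θ1 := by
  set v := θ1 - θ0 with hv
  obtain ⟨hg, hg'⟩ := aux_deriv_along ℓ hℓ θ0 v
  have hmem : ∀ t ∈ Set.Icc (0:ℝ) 1, θ0 + t • v ∈ C := by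
    intro t ht
    have : θ0 + t • v = (1 - t) • θ0 + t • θ1 := by rw [hv]; module
    rw [this]
    exact hCconv h0 h1 (by linarith [ht.2]) ht.1 (by ring)
  have := aux_taylor_lb (fun t => ℓ (θ0 + t • v)) (fun t => fderiv ℝ ℓ (θ0 + t • v) v)
    (fun t => fderiv ℝ (fderiv ℝ ℓ) (θ0 + t • v) v v) hg hg' (m * ‖v‖ ^ 2)
    (fun t ht => hsc' _ (hmem t ht))
  simpa [hv] using this

/-- Any norm on a nontrivial Euclidean space is bounded below by a positive multiple of
the Euclidean norm. -/
lemma aux_norm_lower_bound [Nontrivial (EuclideanSpace ℝ (Fin p))]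
    (n : EuclideanSpace ℝ (Fin p) → ℝ)
    (hn_nonneg : ∀ x, 0 ≤ n x) (hn_def : ∀ x, n x = 0 → x = 0)
    (hn_smul : ∀ (a : ℝ) x, n (a • x) = |a| * n x)
    (hn_add : ∀ x y, n (x + y) ≤ n x + n y) :
    ∃ c > 0, ∀ x, c * ‖x‖ ≤ n x := by
  have hn0 : n 0 = 0 := by simpa using hn_smul 0 0
  set b := EuclideanSpace.basisFun (Fin p) ℝ with hb
  obtain ⟨Cn, hC0, hCn⟩ : ∃ Cn, 0 ≤ Cn ∧ ∀ x, n x ≤ Cn * ‖x‖ := by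
    refine ⟨∑ i, n (b i), Finset.sum_nonneg (fun i _ => hn_nonneg _), fun x => ?_⟩
    have hx : x = ∑ i, x i • b i := by
      have := b.sum_repr x
      simp only [EuclideanSpace.basisFun_repr] at this
      exact this.symm
    calc n x = n (∑ i, x i • b i) := by rw [← hx]
      _ ≤ ∑ i, n (x i • b i) :=
          Finset.le_sum_of_subadditive n hn0.le hn_add _ _
      _ = ∑ i, |x i| * n (b i) := by simp [hn_smul]
      _ ≤ ∑ i, ‖x‖ * n (b i) := by
          apply Finset.sum_le_sum
          intro i _
          refine mul_le_mul_of_nonneg_right ?_ (hn_nonneg _)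
          calc |x i| = Real.sqrt (‖x i‖ ^ 2) := by
                rw [Real.sqrt_sq_eq_abs]; simp [Real.norm_eq_abs, abs_abs]
            _ ≤ Real.sqrt (∑ j, ‖x j‖ ^ 2) := Real.sqrt_le_sqrt
                (Finset.single_le_sum (f := fun j => ‖x j‖ ^ 2)
                  (fun j _ => sq_nonneg _) (Finset.mem_univ i))
            _ = ‖x‖ := (EuclideanSpace.norm_eq x).symm
      _ = (∑ i, n (b i)) * ‖x‖ := by rw [← Finset.mul_sum, mul_comm]
  -- continuity of n
  have hlip : ∀ x y, |n x - n y| ≤ Cn * ‖x - y‖ := by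
    intro x y
    have h1 : n x ≤ n y + n (x - y) := by
      have := hn_add y (x - y); simpa using this
    have h2 : n y ≤ n x + n (y - x) := by
      have := hn_add x (y - x); simpa using this
    have h3 : n (x - y) ≤ Cn * ‖x - y‖ := hCn _
    have h4 : n (y - x) ≤ Cn * ‖y - x‖ := hCn _
    rw [norm_sub_rev] at h4
    rw [abs_le]
    constructor <;> linarith
  have hcont : Continuous n := by
    have : LipschitzWith (Real.toNNReal Cn) n := by
      apply LipschitzWith.of_dist_le_mul
      intro x y
      rw [Real.dist_eq, dist_eq_norm]
      calc |n x - n y| ≤ Cn * ‖x - y‖ := hlip x y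
        _ ≤ Real.toNNReal Cn * ‖x - y‖ :=
            mul_le_mul_of_nonneg_right (Real.le_coe_toNNReal Cn) (norm_nonneg _)
    exact this.continuous
  -- min on sphere
  have hsph : IsCompact (Metric.sphere (0 : EuclideanSpace ℝ (Fin p)) 1) :=
    isCompact_sphere 0 1
  have hne : (Metric.sphere (0 : EuclideanSpace ℝ (Fin p)) 1).Nonempty := by
    obtain ⟨x, hx⟩ := exists_norm_eq (EuclideanSpace ℝ (Fin p)) (zero_le_one)
    exact ⟨x, by simpa [Metric.mem_sphere, dist_eq_norm] using hx⟩
  obtain ⟨x₀, hx₀mem, hx₀min⟩ := hsph.exists_isMinOn hne hcont.continuousOn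
  have hx₀norm : ‖x₀‖ = 1 := by simpa [Metric.mem_sphere, dist_eq_norm] using hx₀mem
  have hc0 : 0 < n x₀ := by
    rcases (hn_nonneg x₀).lt_or_eq with h | h
    · exact h
    · exfalso
      have := hn_def x₀ h.symm
      rw [this] at hx₀norm; simp at hx₀norm
  refine ⟨n x₀, hc0, fun x => ?_⟩
  by_cases hx : x = 0
  · simp [hx, hn0]
  · have hxn : (0:ℝ) < ‖x‖ := norm_pos_iff.mpr hx
    have hmem : (‖x‖⁻¹ • x) ∈ Metric.sphere (0 : EuclideanSpace ℝ (Fin p)) 1 := by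
      simp [Metric.mem_sphere, dist_eq_norm, norm_smul, abs_of_pos (inv_pos.mpr hxn),
        inv_mul_cancel₀ hxn.ne']
    have h2 : n x₀ ≤ n (‖x‖⁻¹ • x) := hx₀min hmem
    rw [hn_smul, abs_of_pos (inv_pos.mpr hxn)] at h2
    have := mul_le_mul_of_nonneg_right h2 hxn.le
    rw [mul_comm (‖x‖⁻¹) (n x), mul_assoc, inv_mul_cancel₀ hxn.ne', mul_one] at this
    linarith

variable {A : Set (EuclideanSpace ℝ (Fin p))} {R : ℝ}

lemma aux_suppFn_bddAbove (hR : ∀ y ∈ A, ‖y‖ ≤ R) (x : EuclideanSpace ℝ (Fin p)) :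
    BddAbove ((fun y => ⟪y, x⟫) '' A) := by
  refine ⟨R * ‖x‖, fun r hr => ?_⟩
  obtain ⟨y, hy, rfl⟩ := hr
  calc ⟪y, x⟫ ≤ ‖y‖ * ‖x‖ := real_inner_le_norm y x
    _ ≤ R * ‖x‖ := mul_le_mul_of_nonneg_right (hR y hy) (norm_nonneg x)

lemma aux_le_suppFn (hR : ∀ y ∈ A, ‖y‖ ≤ R) {y : EuclideanSpace ℝ (Fin p)} (hy : y ∈ A)
    (x : EuclideanSpace ℝ (Fin p)) : ⟪y, x⟫ ≤ suppFn A x :=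
  le_csSup (aux_suppFn_bddAbove hR x) ⟨y, hy, rfl⟩

lemma aux_suppFn_le (hAne : A.Nonempty) (hR : ∀ y ∈ A, ‖y‖ ≤ R)
    (x : EuclideanSpace ℝ (Fin p)) : suppFn A x ≤ R * ‖x‖ := by
  apply csSup_le (hAne.image _)
  rintro r ⟨y, hy, rfl⟩
  calc ⟪y, x⟫ ≤ ‖y‖ * ‖x‖ := real_inner_le_norm y x
    _ ≤ R * ‖x‖ := mul_le_mul_of_nonneg_right (hR y hy) (norm_nonneg x)

lemma aux_suppFn_triangle (hAne : A.Nonempty) (hR : ∀ y ∈ A, ‖y‖ ≤ R)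
    (x z : EuclideanSpace ℝ (Fin p)) : suppFn A (x + z) ≤ suppFn A x + suppFn A z := by
  apply csSup_le (hAne.image _)
  rintro r ⟨y, hy, rfl⟩
  show ⟪y, x + z⟫ ≤ suppFn A x + suppFn A z
  rw [inner_add_right]
  exact add_le_add (aux_le_suppFn hR hy x) (aux_le_suppFn hR hy z)

lemma aux_suppFn_combo (hAne : A.Nonempty) (hR : ∀ y ∈ A, ‖y‖ ≤ R)
    (x z : EuclideanSpace ℝ (Fin p)) {t : ℝ} (ht0 : 0 ≤ t) (ht1 : t ≤ 1) :
    suppFn A ((1 - t) • x + t • z) ≤ (1 - t) * suppFn A x + t * suppFn A z := by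
  apply csSup_le (hAne.image _)
  rintro r ⟨y, hy, rfl⟩
  show ⟪y, (1 - t) • x + t • z⟫ ≤ (1 - t) * suppFn A x + t * suppFn A z
  rw [inner_add_right, real_inner_smul_right, real_inner_smul_right]
  exact add_le_add
    (mul_le_mul_of_nonneg_left (aux_le_suppFn hR hy x) (by linarith))
    (mul_le_mul_of_nonneg_left (aux_le_suppFn hR hy z) ht0)

lemma aux_suppFn_zero (hAne : A.Nonempty) : suppFn A (0 : EuclideanSpace ℝ (Fin p)) = 0 := by
  unfold suppFn
  have : (fun y => ⟪y, (0:EuclideanSpace ℝ (Fin p))⟫) '' A = {0} := by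
    ext r
    simp only [Set.mem_image, Set.mem_singleton_iff]
    constructor
    · rintro ⟨y, hy, rfl⟩; exact inner_zero_right y
    · rintro rfl; exact ⟨hAne.choose, hAne.choose_spec, inner_zero_right _⟩
  rw [this, csSup_singleton]

end Aux

/-- Consistency of the restricted M-estimator: under `m`-restricted strong convexity and
`λ > (2τ̄/τ)‖∇ℓ(θ*)‖`, the minimizer of `ℓ + λ h_A` over the model subspace `M` is unique and
satisfies `‖θ̂ − θ*‖₂ ≤ (2/m)(κ_A + (τ/(2τ̄))κ_{err*}) λ`. -/
theorem restricted_estimator_consistency {p : ℕ}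
    (ℓ : EuclideanSpace ℝ (Fin p) → ℝ) (hℓ : ContDiff ℝ 2 ℓ)
    (hℓconv : ConvexOn ℝ Set.univ ℓ)
    (M : Submodule ℝ (EuclideanSpace ℝ (Fin p)))
    (A : Set (EuclideanSpace ℝ (Fin p))) (hAne : A.Nonempty)
    (hAc : IsClosed A) (hAconv : Convex ℝ A) (hAb : Bornology.IsBounded A)
    (C : Set (EuclideanSpace ℝ (Fin p))) (hCconv : Convex ℝ C)
    (hCM : C ⊆ (M : Set (EuclideanSpace ℝ (Fin p))))
    (θstar θhat : EuclideanSpace ℝ (Fin p)) (hθstar : θstar ∈ C) (hθhat : θhat ∈ C)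
    (m : ℝ) (hm : 0 < m)
    -- restricted strong convexity: `x^T ∇²ℓ(θ) x ≥ m ‖x‖₂²` for `θ ∈ C`, `x ∈ M`
    (hsc : ∀ θ ∈ C, ∀ x ∈ M, m * ‖x‖ ^ 2 ≤ fderiv ℝ (fderiv ℝ ℓ) θ x x)
    -- an abstract error norm `n` with its dual norm `nstar`
    (n : EuclideanSpace ℝ (Fin p) → ℝ)
    (hn_nonneg : ∀ x, 0 ≤ n x) (hn_def : ∀ x, n x = 0 → x = 0)
    (hn_smul : ∀ (a : ℝ) x, n (a • x) = |a| * n x)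
    (hn_add : ∀ x y, n (x + y) ≤ n x + n y)
    (nstar : EuclideanSpace ℝ (Fin p) → ℝ)
    (hnstar : ∀ y, nstar y = sSup {r : ℝ | ∃ x, n x ≤ 1 ∧ ⟪x, y⟫ = r})
    (κerrstar κA : ℝ)
    (hκerrstar : κerrstar = sSup {r : ℝ | ∃ x, ‖x‖ ≤ 1 ∧ x ∈ M ∧ nstar x = r})
    (hκA : κA = sSup {r : ℝ | ∃ x, ‖x‖ ≤ 1 ∧ x ∈ M ∧ suppFn A x = r})
    (τ τbar lam : ℝ) (hτ : 0 < τ) (hττbar : τ ≤ τbar)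
    (hlam : lam > (2 * τbar / τ) * n (gradient ℓ θstar))
    (hmin : IsMinOn (fun θ => ℓ θ + lam * suppFn A θ)
      (M : Set (EuclideanSpace ℝ (Fin p))) θhat) :
    (∀ θ' ∈ (M : Set (EuclideanSpace ℝ (Fin p))),
        IsMinOn (fun θ => ℓ θ + lam * suppFn A θ) (M : Set (EuclideanSpace ℝ (Fin p))) θ' →
        θ' = θhat) ∧
    ‖θhat - θstar‖ ≤ (2 / m) * (κA + (τ / (2 * τbar)) * κerrstar) * lam := by
  have hn0 : n 0 = 0 := by simpa using hn_smul 0 0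
  have hτbar : 0 < τbar := lt_of_lt_of_le hτ hττbar
  have hlam0 : 0 < lam :=
    lt_of_le_of_lt (mul_nonneg (by positivity) (hn_nonneg _)) hlam
  obtain ⟨R, hR⟩ := hAb.exists_norm_le
  have hθhatM : θhat ∈ (M : Set (EuclideanSpace ℝ (Fin p))) := hCM hθhat
  have hθstarM : θstar ∈ (M : Set (EuclideanSpace ℝ (Fin p))) := hCM hθstar
  have hnstar0 : nstar 0 = 0 := by
    rw [hnstar]
    have : {r : ℝ | ∃ x, n x ≤ 1 ∧ ⟪x, (0:EuclideanSpace ℝ (Fin p))⟫ = r} = {0} := by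
      ext r
      simp only [Set.mem_setOf_eq, Set.mem_singleton_iff]
      constructor
      · rintro ⟨x, hx, rfl⟩; exact inner_zero_right x
      · rintro rfl; exact ⟨0, by rw [hn0]; exact zero_le_one, inner_zero_right 0⟩
    rw [this, csSup_singleton]
  constructor
  · -- uniqueness
    intro θ' hθ'M hmin'
    set v := θ' - θhat with hv
    have hvM : v ∈ M := M.sub_mem hθ'M hθhatM
    have hFeq : ℓ θ' + lam * suppFn A θ' = ℓ θhat + lam * suppFn A θhat :=
      le_antisymm (isMinOn_iff.mp hmin' θhat hθhatM) (isMinOn_iff.mp hmin θ' hθ'M)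
    have key : ∀ t ∈ Set.Icc (0:ℝ) 1,
        ℓ (θhat + t • v) = ℓ θhat + t * (ℓ θ' - ℓ θhat) := by
      intro t ht
      have hcomb : θhat + t • v = (1 - t) • θhat + t • θ' := by rw [hv]; module
      have hmemM : θhat + t • v ∈ (M : Set (EuclideanSpace ℝ (Fin p))) := by
        rw [hcomb]
        exact M.add_mem (M.smul_mem _ hθhatM) (M.smul_mem _ hθ'M)
      have hl : ℓ (θhat + t • v) ≤ (1 - t) * ℓ θhat + t * ℓ θ' := by
        rw [hcomb]
        have := hℓconv.2 (Set.mem_univ θhat) (Set.mem_univ θ')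
          (by linarith [ht.2] : (0:ℝ) ≤ 1 - t) ht.1 (by ring)
        simpa [smul_eq_mul] using this
      have hh : suppFn A (θhat + t • v)
          ≤ (1 - t) * suppFn A θhat + t * suppFn A θ' := by
        rw [hcomb]
        exact aux_suppFn_combo hAne hR θhat θ' ht.1 ht.2
      have hhlam := mul_le_mul_of_nonneg_left hh hlam0.le
      have hF1 : ℓ θhat + lam * suppFn A θhat
          ≤ ℓ (θhat + t • v) + lam * suppFn A (θhat + t • v) :=
        isMinOn_iff.mp hmin _ hmemM
      have hFeqt : t * (lam * suppFn A θhat) - t * (lam * suppFn A θ')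
          = t * (ℓ θ') - t * (ℓ θhat) := by linear_combination (-t) * hFeq
      linarith [hF1, hhlam, hl, hFeqt]
    obtain ⟨hg, hg'⟩ := aux_deriv_along ℓ hℓ θhat v
    set G : ℝ → ℝ := fun t => fderiv ℝ ℓ (θhat + t • v) v with hG
    set s : ℝ := ℓ θ' - ℓ θhat with hs
    have hGt : ∀ t ∈ Set.Ioo (0:ℝ) 1, G t = s := by
      intro t ht
      have heq : (fun u => ℓ (θhat + u • v)) =ᶠ[nhds t]
          (fun u => ℓ θhat + u * s) := by
        filter_upwards [Ioo_mem_nhds ht.1 ht.2] with u hu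
        exact key u ⟨hu.1.le, hu.2.le⟩
      have h2 : HasDerivAt (fun u => ℓ (θhat + u • v)) s t := by
        have h3 : HasDerivAt (fun u : ℝ => ℓ θhat + u * s) s t := by
          simpa using ((hasDerivAt_id t).mul_const s).const_add (ℓ θhat)
        exact h3.congr_of_eventuallyEq heq
      exact (hg t).unique h2
    have hGcont : Continuous G :=
      continuous_iff_continuousAt.mpr (fun t => (hg' t).continuousAt)
    have hG0 : G 0 = s := by
      have h1 : Filter.Tendsto G (nhdsWithin 0 (Set.Ioi 0)) (nhds (G 0)) :=
        (hGcont.tendsto 0).mono_left nhdsWithin_le_nhds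
      have h2 : Filter.Tendsto G (nhdsWithin 0 (Set.Ioi 0)) (nhds s) := by
        apply Filter.Tendsto.congr' _ tendsto_const_nhds
        filter_upwards [Ioo_mem_nhdsGT_of_mem
          (Set.mem_Ico.mpr ⟨le_refl (0:ℝ), zero_lt_one⟩)] with u hu
        exact (hGt u hu).symm
      exact tendsto_nhds_unique h1 h2
    have hq : fderiv ℝ (fderiv ℝ ℓ) θhat v v = 0 := by
      have hd : HasDerivAt G (fderiv ℝ (fderiv ℝ ℓ) θhat v v) 0 := by
        have := hg' 0
        simpa using this
      rw [hasDerivAt_iff_tendsto_slope] at hd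
      have h2 : Filter.Tendsto (slope G 0) (nhdsWithin 0 (Set.Ioi 0))
          (nhds (fderiv ℝ (fderiv ℝ ℓ) θhat v v)) :=
        hd.mono_left (nhdsWithin_mono _ (fun x hx => ne_of_gt hx))
      have h3 : Filter.Tendsto (slope G 0) (nhdsWithin 0 (Set.Ioi 0)) (nhds 0) := by
        apply Filter.Tendsto.congr' _ tendsto_const_nhds
        filter_upwards [Ioo_mem_nhdsGT_of_mem
          (Set.mem_Ico.mpr ⟨le_refl (0:ℝ), zero_lt_one⟩)] with u hu
        rw [slope_def_field, hGt u hu, hG0]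
        simp
      exact tendsto_nhds_unique h2 h3
    have hsc0 := hsc θhat hθhat v hvM
    rw [hq] at hsc0
    have h1 : ‖v‖ ^ 2 ≤ 0 := by
      have h2 : m * ‖v‖ ^ 2 ≤ m * 0 := by linarith
      exact le_of_mul_le_mul_left h2 hm
    have hv0 : ‖v‖ ^ 2 = 0 := le_antisymm h1 (sq_nonneg _)
    have : v = 0 := norm_eq_zero.mp (pow_eq_zero_iff two_ne_zero |>.mp hv0)
    rw [hv] at this
    exact sub_eq_zero.mp this
  · -- error bound
    rcases subsingleton_or_nontrivial (EuclideanSpace ℝ (Fin p)) with hss | hnt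
    · -- degenerate case
      have hΔ : θhat - θstar = (0 : EuclideanSpace ℝ (Fin p)) := Subsingleton.elim _ _
      have hκA0 : κA = 0 := by
        rw [hκA]
        have : {r : ℝ | ∃ x, ‖x‖ ≤ 1 ∧ x ∈ M ∧ suppFn A x = r} = {0} := by
          ext r
          simp only [Set.mem_setOf_eq, Set.mem_singleton_iff]
          constructor
          · rintro ⟨x, hx1, hx2, rfl⟩
            have : x = 0 := Subsingleton.elim _ _
            rw [this, aux_suppFn_zero hAne]
          · rintro rfl
            exact ⟨0, by simp, M.zero_mem, aux_suppFn_zero hAne⟩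
        rw [this, csSup_singleton]
      have hκe0 : κerrstar = 0 := by
        rw [hκerrstar]
        have : {r : ℝ | ∃ x, ‖x‖ ≤ 1 ∧ x ∈ M ∧ nstar x = r} = {0} := by
          ext r
          simp only [Set.mem_setOf_eq, Set.mem_singleton_iff]
          constructor
          · rintro ⟨x, hx1, hx2, rfl⟩
            have : x = 0 := Subsingleton.elim _ _
            rw [this, hnstar0]
          · rintro rfl
            exact ⟨0, by simp, M.zero_mem, hnstar0⟩
        rw [this, csSup_singleton]
      rw [hΔ, hκA0, hκe0]
      simp
    · -- nontrivial case
      obtain ⟨c, hc, hcn⟩ := aux_norm_lower_bound n hn_nonneg hn_def hn_smul hn_add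
      have hnstar_bdd : ∀ x : EuclideanSpace ℝ (Fin p),
          BddAbove {r : ℝ | ∃ x', n x' ≤ 1 ∧ ⟪x', x⟫ = r} := by
        intro x
        refine ⟨c⁻¹ * ‖x‖, fun r hr => ?_⟩
        obtain ⟨x', hx', rfl⟩ := hr
        have h1 : c * ‖x'‖ ≤ n x' := hcn x'
        have h2 : ‖x'‖ ≤ c⁻¹ := by
          rw [← one_div, le_div_iff₀ hc]
          nlinarith [le_trans h1 hx']
        calc ⟪x', x⟫ ≤ ‖x'‖ * ‖x‖ := real_inner_le_norm x' x
          _ ≤ c⁻¹ * ‖x‖ := mul_le_mul_of_nonneg_right h2 (norm_nonneg x)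
      have hnstar_le : ∀ x : EuclideanSpace ℝ (Fin p), nstar x ≤ c⁻¹ * ‖x‖ := by
        intro x
        rw [hnstar]
        have hne2 : {r : ℝ | ∃ x', n x' ≤ 1 ∧ ⟪x', x⟫ = r}.Nonempty :=
          ⟨0, 0, by rw [hn0]; exact zero_le_one, inner_zero_left x⟩
        apply csSup_le hne2
        rintro r ⟨x', hx', rfl⟩
        have h1 : c * ‖x'‖ ≤ n x' := hcn x'
        have h2 : ‖x'‖ ≤ c⁻¹ := by
          rw [← one_div, le_div_iff₀ hc]
          nlinarith [le_trans h1 hx']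
        calc ⟪x', x⟫ ≤ ‖x'‖ * ‖x‖ := real_inner_le_norm x' x
          _ ≤ c⁻¹ * ‖x‖ := mul_le_mul_of_nonneg_right h2 (norm_nonneg x)
      have hnstar_nonneg : ∀ x : EuclideanSpace ℝ (Fin p), 0 ≤ nstar x := by
        intro x
        rw [hnstar]
        exact le_csSup (hnstar_bdd x)
          ⟨0, by rw [hn0]; exact zero_le_one, inner_zero_left x⟩
      have hκerr_bdd : BddAbove {r : ℝ | ∃ x, ‖x‖ ≤ 1 ∧ x ∈ M ∧ nstar x = r} := by
        refine ⟨c⁻¹, fun r hr => ?_⟩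
        obtain ⟨x, hx1, _, rfl⟩ := hr
        calc nstar x ≤ c⁻¹ * ‖x‖ := hnstar_le x
          _ ≤ c⁻¹ * 1 := mul_le_mul_of_nonneg_left hx1 (by positivity)
          _ = c⁻¹ := mul_one _
      have hκerr_nonneg : 0 ≤ κerrstar := by
        rw [hκerrstar]
        exact le_csSup hκerr_bdd ⟨0, by simp, M.zero_mem, hnstar0⟩
      have hR0 : (0:ℝ) ≤ R := le_trans (norm_nonneg _) (hR _ hAne.choose_spec)
      have hκA_bdd : BddAbove {r : ℝ | ∃ x, ‖x‖ ≤ 1 ∧ x ∈ M ∧ suppFn A x = r} := by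
        refine ⟨R, fun r hr => ?_⟩
        obtain ⟨x, hx1, _, rfl⟩ := hr
        calc suppFn A x ≤ R * ‖x‖ := aux_suppFn_le hAne hR x
          _ ≤ R * 1 := mul_le_mul_of_nonneg_left hx1 hR0
          _ = R := mul_one _
      have hκA_nonneg : 0 ≤ κA := by
        rw [hκA]
        exact le_csSup hκA_bdd ⟨0, by simp, M.zero_mem, aux_suppFn_zero hAne⟩
      by_cases hΔeq : θhat = θstar
      · rw [hΔeq]
        simp only [sub_self, norm_zero]
        have h1 : 0 ≤ κA + τ / (2 * τbar) * κerrstar :=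
          add_nonneg hκA_nonneg (mul_nonneg (by positivity) hκerr_nonneg)
        have := mul_nonneg (mul_nonneg (by positivity : (0:ℝ) ≤ 2 / m) h1) hlam0.le
        linarith
      · set Δ := θhat - θstar with hΔ
        have hΔM : Δ ∈ M := M.sub_mem hθhatM hθstarM
        have hΔne : Δ ≠ 0 := sub_ne_zero.mpr hΔeq
        have hΔpos : (0:ℝ) < ‖Δ‖ := norm_pos_iff.mpr hΔne
        set u : EuclideanSpace ℝ (Fin p) := ‖Δ‖⁻¹ • (-Δ) with hu
        have huM : u ∈ M := M.smul_mem _ (M.neg_mem hΔM)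
        have hunorm : ‖u‖ = 1 := by
          rw [hu, norm_smul, norm_neg, Real.norm_eq_abs, abs_of_pos (inv_pos.mpr hΔpos),
            inv_mul_cancel₀ hΔpos.ne']
        have hrepr : θstar - θhat = ‖Δ‖ • u := by
          rw [hu, smul_smul, mul_inv_cancel₀ hΔpos.ne', one_smul, hΔ, neg_sub]
        set g : EuclideanSpace ℝ (Fin p) := gradient ℓ θstar with hg
        have hgrad : ∀ w, ⟪g, w⟫ = fderiv ℝ ℓ θstar w := by
          intro w
          rw [hg]
          exact InnerProductSpace.toDual_symm_apply
        have h_inner_u : ⟪g, u⟫ ≤ n g * κerrstar := by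
          by_cases hng : n g = 0
          · have hg0 : g = 0 := hn_def _ hng
            rw [hg0, hn0, inner_zero_left, zero_mul]
          · have hngpos : 0 < n g := lt_of_le_of_ne (hn_nonneg g) (Ne.symm hng)
            set w : EuclideanSpace ℝ (Fin p) := (n g)⁻¹ • g with hw
            have hnw : n w = 1 := by
              rw [hw, hn_smul, abs_of_pos (inv_pos.mpr hngpos),
                inv_mul_cancel₀ hngpos.ne']
            have h1 : ⟪w, u⟫ ≤ nstar u := by
              rw [hnstar]
              exact le_csSup (hnstar_bdd u) ⟨w, le_of_eq hnw, rfl⟩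
            have h2 : nstar u ≤ κerrstar := by
              rw [hκerrstar]
              exact le_csSup hκerr_bdd ⟨u, hunorm.le, huM, rfl⟩
            have h3 : ⟪g, u⟫ = n g * ⟪w, u⟫ := by
              rw [hw, real_inner_smul_left, ← mul_assoc,
                mul_inv_cancel₀ hngpos.ne', one_mul]
            rw [h3]
            exact mul_le_mul_of_nonneg_left (h1.trans h2) (hn_nonneg g)
        have h_supp_u : suppFn A u ≤ κA := by
          rw [hκA]
          exact le_csSup hκA_bdd ⟨u, hunorm.le, huM, rfl⟩
        have hsc_ineq : ℓ θstar + fderiv ℝ ℓ θstar Δ + m * ‖Δ‖ ^ 2 / 2 ≤ ℓ θhat := by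
          have := aux_sc_taylor ℓ hℓ C hCconv θstar θhat hθstar hθhat m
            (fun θ hθ => hsc θ hθ (θhat - θstar) hΔM)
          rw [← hΔ] at this
          exact this
        have hFmin : ℓ θhat + lam * suppFn A θhat ≤ ℓ θstar + lam * suppFn A θstar :=
          isMinOn_iff.mp hmin θstar hθstarM
        have h_supp_diff : suppFn A θstar ≤ suppFn A θhat + suppFn A (θstar - θhat) := by
          have h1 : θhat + (θstar - θhat) = θstar := by abel
          have := aux_suppFn_triangle hAne hR θhat (θstar - θhat)
          rw [h1] at this
          exact this
        have h_supp_neg : suppFn A (θstar - θhat) ≤ κA * ‖Δ‖ := by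
          apply csSup_le (hAne.image _)
          rintro r ⟨y, hy, rfl⟩
          show ⟪y, θstar - θhat⟫ ≤ κA * ‖Δ‖
          rw [hrepr, real_inner_smul_right]
          calc ‖Δ‖ * ⟪y, u⟫ ≤ ‖Δ‖ * κA :=
                mul_le_mul_of_nonneg_left
                  ((aux_le_suppFn hR hy u).trans h_supp_u) (norm_nonneg _)
            _ = κA * ‖Δ‖ := mul_comm _ _
        have h_inner_diff : -(fderiv ℝ ℓ θstar Δ) ≤ n g * κerrstar * ‖Δ‖ := by
          calc -(fderiv ℝ ℓ θstar Δ) = -⟪g, Δ⟫ := by rw [hgrad]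
            _ = ⟪g, θstar - θhat⟫ := by
                rw [← inner_neg_right]; congr 1; rw [hΔ, neg_sub]
            _ = ‖Δ‖ * ⟪g, u⟫ := by rw [hrepr, real_inner_smul_right]
            _ ≤ ‖Δ‖ * (n g * κerrstar) :=
                mul_le_mul_of_nonneg_left h_inner_u (norm_nonneg _)
            _ = n g * κerrstar * ‖Δ‖ := by ring
        have hng_le : n g ≤ τ / (2 * τbar) * lam := by
          have h1 : τ * ((2 * τbar / τ) * n g) = 2 * τbar * n g := by
            field_simp
          have h2 : τ * ((2 * τbar / τ) * n g) < τ * lam :=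
            mul_lt_mul_of_pos_left hlam hτ
          rw [h1] at h2
          rw [div_mul_eq_mul_div, le_div_iff₀ (by positivity)]
          nlinarith
        -- combine
        have hfin : m * ‖Δ‖ ^ 2 / 2 ≤ (κA + τ / (2 * τbar) * κerrstar) * lam * ‖Δ‖ := by
          have hsupp := mul_le_mul_of_nonneg_left h_supp_diff hlam0.le
          have hsuppneg := mul_le_mul_of_nonneg_left h_supp_neg hlam0.le
          have hng2 := mul_le_mul_of_nonneg_right hng_le
            (mul_nonneg hκerr_nonneg (norm_nonneg Δ))
          linarith [hsc_ineq, hFmin, hsupp, hsuppneg, h_inner_diff, hng2]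
        have hfinal : m * ‖Δ‖ ≤ 2 * ((κA + τ / (2 * τbar) * κerrstar) * lam) := by
          have h3 : (m * ‖Δ‖) * ‖Δ‖ ≤ (2 * ((κA + τ / (2 * τbar) * κerrstar) * lam)) * ‖Δ‖ := by
            have h4 : m * ‖Δ‖ ^ 2 = (m * ‖Δ‖) * ‖Δ‖ := by ring
            linarith [hfin]
          exact le_of_mul_le_mul_right h3 hΔpos
        calc ‖θhat - θstar‖ = (m * ‖Δ‖) / m := by
              rw [hΔ]; field_simp
          _ ≤ (2 * ((κA + τ / (2 * τbar) * κerrstar) * lam)) / m :=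
              by gcongr
          _ = 2 / m * (κA + τ / (2 * τbar) * κerrstar) * lam := by ring
end

section
/- ℓ_{2,1} bound for the penalized MLE: Let ℓ(θ) = −⟨θ, φⁿ⟩ + A(θ) with A convex differentiable, θ* a point with ∇A(θ*) = φ*, and θ̂ a minimizer of ℓ(θ) + λ‖θ‖_{2,1}. If λ > ‖φⁿ − φ*‖_{2,∞}, then ‖θ̂‖_{2,1} ≤ (λ‖θ*‖_{2,1} + ‖φⁿ − φ*‖_{2,∞}‖θ*‖_{2,1}) / (λ − ‖φⁿ − φ*‖_{2,∞}). -/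
open RealInnerProductSpace

/-- The ℓ2 norm of the subvector of `x` on the group `{i | grp i = g}`. -/
noncomputable def groupNorm {p : ℕ} {G : Type*} [Fintype G] [DecidableEq G] (grp : Fin p → G)
    (x : EuclideanSpace ℝ (Fin p)) (g : G) : ℝ :=
  Real.sqrt (∑ i ∈ Finset.univ.filter (fun i => grp i = g), (x i) ^ 2)

/-- The group ℓ_{2,1} norm `Σ_g ‖x_g‖₂`. -/
noncomputable def norm21 {p : ℕ} {G : Type*} [Fintype G] [DecidableEq G] (grp : Fin p → G)
    (x : EuclideanSpace ℝ (Fin p)) : ℝ :=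
  ∑ g : G, groupNorm grp x g

/-- The group ℓ_{2,∞} norm `max_g ‖x_g‖₂`. -/
noncomputable def norm2inf {p : ℕ} {G : Type*} [Fintype G] [DecidableEq G] (grp : Fin p → G)
    (x : EuclideanSpace ℝ (Fin p)) : ℝ :=
  ⨆ g : G, groupNorm grp x g

noncomputable def subvec {p : ℕ} {G : Type*} [DecidableEq G] (grp : Fin p → G) (g : G)
    (x : EuclideanSpace ℝ (Fin p)) : EuclideanSpace ℝ {i : Fin p // grp i = g} :=
  WithLp.toLp 2 (fun i => x i.1)

lemma groupNorm_eq_norm {p : ℕ} {G : Type*} [Fintype G] [DecidableEq G] (grp : Fin p → G)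
    (x : EuclideanSpace ℝ (Fin p)) (g : G) :
    groupNorm grp x g = ‖subvec grp g x‖ := by
  rw [EuclideanSpace.norm_eq, groupNorm]
  congr 1
  have h : ∑ i ∈ Finset.univ.filter (fun i => grp i = g), (x i) ^ 2
      = ∑ i : {i : Fin p // grp i = g}, (x i.1) ^ 2 :=
    Finset.sum_subtype (Finset.univ.filter (fun i => grp i = g)) (by simp) (fun i => (x i) ^ 2)
  rw [h]
  simp [subvec, Real.norm_eq_abs, sq_abs]

lemma subvec_add {p : ℕ} {G : Type*} [DecidableEq G] (grp : Fin p → G) (g : G)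
    (x y : EuclideanSpace ℝ (Fin p)) :
    subvec grp g (x + y) = subvec grp g x + subvec grp g y := by
  ext i; simp [subvec]

lemma subvec_sub {p : ℕ} {G : Type*} [DecidableEq G] (grp : Fin p → G) (g : G)
    (x y : EuclideanSpace ℝ (Fin p)) :
    subvec grp g (x - y) = subvec grp g x - subvec grp g y := by
  ext i; simp [subvec]

lemma groupNorm_nonneg {p : ℕ} {G : Type*} [Fintype G] [DecidableEq G] (grp : Fin p → G)
    (x : EuclideanSpace ℝ (Fin p)) (g : G) : 0 ≤ groupNorm grp x g :=
  Real.sqrt_nonneg _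

lemma norm21_nonneg {p : ℕ} {G : Type*} [Fintype G] [DecidableEq G] (grp : Fin p → G)
    (x : EuclideanSpace ℝ (Fin p)) : 0 ≤ norm21 grp x :=
  Finset.sum_nonneg fun g _ => groupNorm_nonneg grp x g

lemma groupNorm_le_norm2inf {p : ℕ} {G : Type*} [Fintype G] [DecidableEq G] (grp : Fin p → G)
    (x : EuclideanSpace ℝ (Fin p)) (g : G) : groupNorm grp x g ≤ norm2inf grp x :=
  le_ciSup (Set.Finite.bddAbove (Set.finite_range _)) g

lemma norm2inf_nonneg {p : ℕ} {G : Type*} [Fintype G] [DecidableEq G] [Nonempty G]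
    (grp : Fin p → G) (x : EuclideanSpace ℝ (Fin p)) : 0 ≤ norm2inf grp x :=
  le_trans (groupNorm_nonneg grp x (Classical.arbitrary G)) (groupNorm_le_norm2inf grp x _)

lemma norm21_sub_le {p : ℕ} {G : Type*} [Fintype G] [DecidableEq G] (grp : Fin p → G)
    (x y : EuclideanSpace ℝ (Fin p)) :
    norm21 grp (x - y) ≤ norm21 grp x + norm21 grp y := by
  rw [norm21, norm21, norm21, ← Finset.sum_add_distrib]
  refine Finset.sum_le_sum fun g _ => ?_
  rw [groupNorm_eq_norm, groupNorm_eq_norm, groupNorm_eq_norm, subvec_sub]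
  exact norm_sub_le _ _

/-- inner = sum of group inners, bounded by duality. -/
lemma inner_le_norm21_mul_norm2inf {p : ℕ} {G : Type*} [Fintype G] [DecidableEq G] [Nonempty G]
    (grp : Fin p → G) (u v : EuclideanSpace ℝ (Fin p)) :
    ⟪u, v⟫ ≤ norm21 grp u * norm2inf grp v := by
  have hdecomp : ⟪u, v⟫ = ∑ g : G, ⟪subvec grp g u, subvec grp g v⟫ := by
    simp only [PiLp.inner_apply, RCLike.inner_apply, conj_trivial]
    rw [← Finset.sum_fiberwise Finset.univ grp (fun i => v i * u i)]
    refine Finset.sum_congr rfl fun g _ => ?_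
    have h : ∑ i ∈ Finset.univ.filter (fun i => grp i = g), v i * u i
        = ∑ i : {i : Fin p // grp i = g}, v i.1 * u i.1 :=
      Finset.sum_subtype (Finset.univ.filter (fun i => grp i = g)) (by simp) (fun i => v i * u i)
    rw [h]
    rfl
  rw [hdecomp, norm21, Finset.sum_mul]
  refine Finset.sum_le_sum fun g _ => ?_
  calc ⟪subvec grp g u, subvec grp g v⟫ ≤ ‖subvec grp g u‖ * ‖subvec grp g v‖ :=
        real_inner_le_norm _ _
    _ ≤ groupNorm grp u g * norm2inf grp v := by
        rw [groupNorm_eq_norm]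
        exact mul_le_mul_of_nonneg_left
          ((groupNorm_eq_norm grp v g) ▸ groupNorm_le_norm2inf grp v g) (norm_nonneg _)

/-- First-order condition for convex differentiable functions. -/
lemma convex_grad_ineq {p : ℕ} (A : EuclideanSpace ℝ (Fin p) → ℝ)
    (hAconv : ConvexOn ℝ Set.univ A) (hAdiff : Differentiable ℝ A)
    (x y : EuclideanSpace ℝ (Fin p)) :
    A x + ⟪gradient A x, y - x⟫ ≤ A y := by
  set d := y - x with hd
  have hgr : HasGradientAt A (gradient A x) x := (hAdiff x).hasGradientAt
  have hfd : HasFDerivAt A ((InnerProductSpace.toDual ℝ _) (gradient A x)) x := by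
    rw [hasGradientAt_iff_hasFDerivAt] at hgr; exact hgr
  -- curve
  have hcurve : ∀ t : ℝ, HasDerivAt (fun t : ℝ => x + t • d) d t := by
    intro t
    simpa using ((hasDerivAt_id t).smul_const d).const_add x
  have hg : HasDerivAt (fun t : ℝ => A (x + t • d)) ⟪gradient A x, d⟫ 0 := by
    have h0 : x = x + (0:ℝ) • d := by simp
    have := (h0 ▸ hfd).comp_hasDerivAt (0:ℝ) (hcurve 0)
    rw [zero_smul, add_zero] at this
    exact this
  -- convexity of the restriction
  have hgconv : ConvexOn ℝ Set.univ (fun t : ℝ => A (x + t • d)) := by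
    have := hAconv.comp_affineMap (AffineMap.lineMap x y)
    have he : (fun t : ℝ => A (x + t • d)) = A ∘ (AffineMap.lineMap x y) := by
      funext t; simp [AffineMap.lineMap_apply, hd, add_comm]
    rw [he]
    simpa using this
  have h01 : (0 : ℝ) < 1 := one_pos
  have hsl := hgconv.le_slope_of_hasDerivAt (Set.mem_univ (0:ℝ)) (Set.mem_univ (1:ℝ)) h01 hg
  have e1 : x + (1:ℝ) • d = y := by simp [hd]
  simp only [slope_def_field, e1, zero_smul, add_zero] at hsl
  rw [sub_zero, div_one] at hsl
  linarith

/-- ℓ_{2,1} bound for the penalized MLE: if `θ̂` minimizes `−⟪θ, φⁿ⟫ + A(θ) + λ‖θ‖_{2,1}` with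
`A` convex differentiable, `∇A(θ*) = φ*`, and `λ > ‖φⁿ − φ*‖_{2,∞}`, then
`‖θ̂‖_{2,1} ≤ (λ‖θ*‖_{2,1} + ‖φⁿ − φ*‖_{2,∞}‖θ*‖_{2,1}) / (λ − ‖φⁿ − φ*‖_{2,∞})`. -/
theorem penalized_mle_l21_bound {p : ℕ} {G : Type*} [Fintype G] [DecidableEq G] [Nonempty G]
    (grp : Fin p → G)
    (A : EuclideanSpace ℝ (Fin p) → ℝ) (hAconv : ConvexOn ℝ Set.univ A)
    (hAdiff : Differentiable ℝ A)
    (φn φstar θstar θhat : EuclideanSpace ℝ (Fin p))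
    (hgrad : gradient A θstar = φstar)
    (lam : ℝ) (hlam : norm2inf grp (φn - φstar) < lam)
    (hmin : IsMinOn (fun θ => -⟪θ, φn⟫ + A θ + lam * norm21 grp θ) Set.univ θhat) :
    norm21 grp θhat ≤
      (lam * norm21 grp θstar + norm2inf grp (φn - φstar) * norm21 grp θstar)
        / (lam - norm2inf grp (φn - φstar)) := by
  set ε := norm2inf grp (φn - φstar) with hε
  have hεnn : 0 ≤ ε := norm2inf_nonneg grp _
  have hmin' := hmin (Set.mem_univ θstar)
  simp only [Set.mem_univ] at hmin'
  have hconv : A θstar + ⟪φstar, θhat - θstar⟫ ≤ A θhat := by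
    have := convex_grad_ineq A hAconv hAdiff θstar θhat
    rwa [hgrad] at this
  have hdual : ⟪θhat - θstar, φn - φstar⟫ ≤ norm21 grp (θhat - θstar) * ε :=
    inner_le_norm21_mul_norm2inf grp _ _
  have htri : norm21 grp (θhat - θstar) ≤ norm21 grp θhat + norm21 grp θstar :=
    norm21_sub_le grp _ _
  have hinner : ⟪θhat - θstar, φn - φstar⟫
      = ⟪θhat, φn⟫ - ⟪θstar, φn⟫ - ⟪φstar, θhat - θstar⟫ := by
    rw [real_inner_comm (θhat - θstar) φstar]
    simp only [inner_sub_left, inner_sub_right]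
  have hkey : lam * norm21 grp θhat ≤ lam * norm21 grp θstar + (norm21 grp θhat + norm21 grp θstar) * ε := by
    have h1 : ⟪θhat - θstar, φn - φstar⟫ ≤ (norm21 grp θhat + norm21 grp θstar) * ε :=
      le_trans hdual (mul_le_mul_of_nonneg_right htri hεnn)
    have h2 := hmin'
    simp only [Set.mem_setOf_eq] at h2
    rw [hinner] at h1
    nlinarith [hconv, h1, h2]
  rw [le_div_iff₀ (by linarith)]
  nlinarith [hkey]
end
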